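/- The function ψ(p) = 2^(p/2 − 1) / (1 + cos(π/p))^(p/2) is decreasing on (1, 2], so that ψ(p) ≥ ψ(2) = 1 for all 1 < p ≤ 2. -/

import Mathlib

open Real Set

private lemma cos_pos_of (x : ℝ) (hx : x ∈ Ico (π/4) (π/2)) : 0 < Real.cos x := by
  apply Real.cos_pos_of_mem_Ioo
  constructor
  · nlinarith [Real.pi_pos, hx.1]
  · exact hx.2

private lemma hasDerivAt_g {x : ℝ} (hc : Real.cos x ≠ 0) :
    HasDerivAt (fun x => x * Real.tan x + Real.log (Real.cos x))
      (x / Real.cos x ^ 2) x := by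
  have h1 : HasDerivAt (fun x => x * Real.tan x)
      (1 * Real.tan x + x * (1 / Real.cos x ^ 2)) x :=
    (hasDerivAt_id x).mul (Real.hasDerivAt_tan hc)
  have h2 : HasDerivAt (fun x => Real.log (Real.cos x))
      (-Real.sin x / Real.cos x) x := (Real.hasDerivAt_cos x).log hc
  have := h1.add h2
  refine this.congr_deriv ?_
  rw [Real.tan_eq_sin_div_cos]
  field_simp
  ring

private lemma g_nonneg (x : ℝ) (hx : x ∈ Ico (π/4) (π/2)) :
    0 ≤ x * Real.tan x + Real.log (Real.cos x) := by
  set g : ℝ → ℝ := fun x => x * Real.tan x + Real.log (Real.cos x) with hg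
  have hmono : MonotoneOn g (Ico (π/4) (π/2)) := by
    apply monotoneOn_of_deriv_nonneg (convex_Ico _ _)
    · intro y hy
      exact (hasDerivAt_g (ne_of_gt (cos_pos_of y hy))).continuousAt.continuousWithinAt
    · intro y hy
      rw [interior_Ico] at hy
      exact ((hasDerivAt_g (ne_of_gt (cos_pos_of y (Ioo_subset_Ico_self hy)))).differentiableAt).differentiableWithinAt
    · intro y hy
      rw [interior_Ico] at hy
      have hcy := cos_pos_of y (Ioo_subset_Ico_self hy)
      rw [(hasDerivAt_g (ne_of_gt hcy)).deriv]
      have : (0:ℝ) < y := by nlinarith [Real.pi_pos, hy.1]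
      positivity
  have hπ4 : (π/4 : ℝ) ∈ Ico (π/4) (π/2) := ⟨le_refl _, by linarith [Real.pi_pos]⟩
  have h0 : g (π/4) ≤ g x := hmono hπ4 hx hx.1
  have hval : g (π/4) = π/4 - Real.log 2 / 2 := by
    rw [hg]
    simp only [Real.tan_pi_div_four, Real.cos_pi_div_four, mul_one]
    rw [div_eq_mul_inv (Real.sqrt 2), Real.log_mul (by positivity) (by norm_num),
      Real.log_sqrt (by norm_num), Real.log_inv]
    ring
  have hlog2 : Real.log 2 < 0.6931471808 := Real.log_two_lt_d9
  have hpi : 3 < π := Real.pi_gt_three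
  linarith [h0, hval.symm.le]

private lemma hasDerivAt_h {x : ℝ} (hx0 : x ≠ 0) (hc : Real.cos x ≠ 0) :
    HasDerivAt (fun x => Real.log (Real.cos x) / x)
      ((-Real.sin x / Real.cos x * x - Real.log (Real.cos x) * 1) / x ^ 2) x :=
  ((Real.hasDerivAt_cos x).log hc).div (hasDerivAt_id x) hx0

private lemma h_antitone : AntitoneOn (fun x => Real.log (Real.cos x) / x)
    (Ico (π/4) (π/2)) := by
  apply antitoneOn_of_deriv_nonpos (convex_Ico _ _)
  · intro y hy
    have h1 : (0:ℝ) < y := by nlinarith [Real.pi_pos, hy.1]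
    exact (hasDerivAt_h (ne_of_gt h1) (ne_of_gt (cos_pos_of y hy))).continuousAt.continuousWithinAt
  · intro y hy
    rw [interior_Ico] at hy
    have h1 : (0:ℝ) < y := by nlinarith [Real.pi_pos, hy.1]
    exact (hasDerivAt_h (ne_of_gt h1) (ne_of_gt (cos_pos_of y (Ioo_subset_Ico_self hy)))).differentiableAt.differentiableWithinAt
  · intro y hy
    rw [interior_Ico] at hy
    have hy' := Ioo_subset_Ico_self hy
    have h1 : (0:ℝ) < y := by nlinarith [Real.pi_pos, hy.1]
    have hcy := cos_pos_of y hy'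
    rw [(hasDerivAt_h (ne_of_gt h1) (ne_of_gt hcy)).deriv]
    have hg := g_nonneg y hy'
    rw [Real.tan_eq_sin_div_cos] at hg
    apply div_nonpos_of_nonpos_of_nonneg
    · have e : -Real.sin y / Real.cos y * y - Real.log (Real.cos y) * 1
          = -(y * (Real.sin y / Real.cos y) + Real.log (Real.cos y)) := by ring
      rw [e]; linarith
    · positivity

private lemma psi_eq (p : ℝ) (hp1 : 1 < p) (hp2 : p ≤ 2) :
    (2 : ℝ) ^ (p / 2 - 1) / (1 + Real.cos (π / p)) ^ (p / 2)
      = Real.exp (-(p * Real.log (Real.cos (π / (2 * p))))) / 2 := by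
  have hp0 : (0:ℝ) < p := by linarith
  have hmem : π / (2 * p) ∈ Ico (π/4) (π/2) := by
    constructor
    · rw [div_le_div_iff₀ (by positivity) (by positivity)]
      nlinarith [Real.pi_pos]
    · rw [div_lt_div_iff₀ (by positivity) (by norm_num)]
      nlinarith [Real.pi_pos]
  have hc : 0 < Real.cos (π / (2 * p)) := cos_pos_of _ hmem
  have hsum : 1 + Real.cos (π / p) = 2 * Real.cos (π / (2 * p)) ^ 2 := by
    have := Real.cos_sq (π / (2 * p))
    rw [this]
    have : 2 * (π / (2 * p)) = π / p := by field_simp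
    rw [this]; ring
  rw [hsum]
  have hpos : (0:ℝ) < 2 * Real.cos (π / (2 * p)) ^ 2 := by positivity
  rw [Real.rpow_def_of_pos (by norm_num : (0:ℝ) < 2),
    Real.rpow_def_of_pos hpos,
    Real.log_mul (by norm_num) (by positivity), Real.log_pow]
  rw [← Real.exp_sub]
  have heq : Real.log 2 * (p/2-1) - (Real.log 2 + (2:ℕ) * Real.log (Real.cos (π/(2*p)))) * (p/2)
      = -(p * Real.log (Real.cos (π/(2*p)))) - Real.log 2 := by push_cast; ring
  rw [heq, Real.exp_sub, Real.exp_log (show (0:ℝ) < 2 by norm_num)]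

theorem stmt_7 :
    (∀ p q : ℝ, 1 < p → p ≤ q → q ≤ 2 →
      (2 : ℝ) ^ (q / 2 - 1) / (1 + Real.cos (π / q)) ^ (q / 2)
        ≤ (2 : ℝ) ^ (p / 2 - 1) / (1 + Real.cos (π / p)) ^ (p / 2)) ∧
    ((2 : ℝ) ^ ((2 : ℝ) / 2 - 1) / (1 + Real.cos (π / 2)) ^ ((2 : ℝ) / 2) = 1) ∧
    (∀ p : ℝ, 1 < p → p ≤ 2 →
      1 ≤ (2 : ℝ) ^ (p / 2 - 1) / (1 + Real.cos (π / p)) ^ (p / 2)) := by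
  have key : ∀ p q : ℝ, 1 < p → p ≤ q → q ≤ 2 →
      (2 : ℝ) ^ (q / 2 - 1) / (1 + Real.cos (π / q)) ^ (q / 2)
        ≤ (2 : ℝ) ^ (p / 2 - 1) / (1 + Real.cos (π / p)) ^ (p / 2) := by
    intro p q hp1 hpq hq2
    have hq1 : 1 < q := lt_of_lt_of_le hp1 hpq
    have hp2 : p ≤ 2 := le_trans hpq hq2
    rw [psi_eq p hp1 hp2, psi_eq q hq1 hq2]
    have hp0 : (0:ℝ) < p := by linarith
    have hq0 : (0:ℝ) < q := by linarith
    set a := π / (2 * p) with ha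
    set b := π / (2 * q) with hb
    have hamem : a ∈ Ico (π/4) (π/2) := by
      constructor
      · rw [ha, div_le_div_iff₀ (by positivity) (by positivity)]
        nlinarith [Real.pi_pos]
      · rw [ha, div_lt_div_iff₀ (by positivity) (by norm_num)]
        nlinarith [Real.pi_pos]
    have hbmem : b ∈ Ico (π/4) (π/2) := by
      constructor
      · rw [hb, div_le_div_iff₀ (by positivity) (by positivity)]
        nlinarith [Real.pi_pos]
      · rw [hb, div_lt_div_iff₀ (by positivity) (by norm_num)]
        nlinarith [Real.pi_pos]
    have hba : b ≤ a := by
      rw [ha, hb, div_le_div_iff₀ (by positivity) (by positivity)]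
      nlinarith [Real.pi_pos]
    have hh := h_antitone hbmem hamem hba
    -- hh : log (cos a) / a ≤ log (cos b) / b
    have hae : p = π / 2 / a := by rw [ha]; field_simp
    have hbe : q = π / 2 / b := by rw [hb]; field_simp
    have ha0 : (0:ℝ) < a := by nlinarith [Real.pi_pos, hamem.1]
    have hb0 : (0:ℝ) < b := by nlinarith [Real.pi_pos, hbmem.1]
    have hmul : p * Real.log (Real.cos a) ≤ q * Real.log (Real.cos b) := by
      rw [hae, hbe]
      have := mul_le_mul_of_nonneg_left hh (by positivity : (0:ℝ) ≤ π/2)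
      calc π / 2 / a * Real.log (Real.cos a) = π/2 * (Real.log (Real.cos a) / a) := by ring
        _ ≤ π/2 * (Real.log (Real.cos b) / b) := this
        _ = π / 2 / b * Real.log (Real.cos b) := by ring
    have hexp : Real.exp (-(q * Real.log (Real.cos b))) ≤ Real.exp (-(p * Real.log (Real.cos a))) := by
      apply Real.exp_le_exp.mpr; linarith
    linarith
  have h2 : (2 : ℝ) ^ ((2 : ℝ) / 2 - 1) / (1 + Real.cos (π / 2)) ^ ((2 : ℝ) / 2) = 1 := by
    norm_num [Real.cos_pi_div_two]
  refine ⟨key, h2, ?_⟩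
  intro p hp1 hp2
  have := key p 2 hp1 hp2 le_rfl
  rw [h2] at this
  exact this
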